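/- Let n ≥ 1, let (F, Σₙ, ⬠) be an (n+2)-angulated Krull–Schmidt category and let A ⊆ F be a full, additive, n-extension closed subcategory with Hom_F(ΣₙA, A) = 0. Then every A-conflation is an n-exact sequence in A. -/

import Mathlib

open CategoryTheory CategoryTheory.Limits

universe v u

namespace NAng

instance (priority := 100) hasBinBiprod (C : Type u) [Category.{v} C] [Preadditive C]
    [HasFiniteBiproducts C] : HasBinaryBiproducts C :=
  hasBinaryBiproducts_of_finite_biproducts C

variable {C : Type u} [Category.{v} C] [Preadditive C] [HasFiniteBiproducts C]

/-- A morphism `f : X ⟶ Y` lies in the radical if for every `g : Y ⟶ X` the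
endomorphism `𝟙 X - f ≫ g` is invertible. -/
def InRad {X Y : C} (f : X ⟶ Y) : Prop :=
  ∀ g : Y ⟶ X, IsIso (𝟙 X - f ≫ g)

/-- A Krull–Schmidt category: every object is a finite direct sum of objects having
local endomorphism rings. -/
def KrullSchmidt (C : Type u) [Category.{v} C] [Preadditive C] [HasFiniteBiproducts C] : Prop :=
  ∀ X : C, ∃ (k : ℕ) (Y : Fin k → C),
    Nonempty (X ≅ ⨁ Y) ∧ ∀ i, IsLocalRing (End (Y i))

/-- `Z ∈ add M`: `Z` is a retract of a finite direct sum of copies of `M`. -/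
def InAdd (M Z : C) : Prop :=
  ∃ (k : ℕ) (ι : Z ⟶ ⨁ fun _ : Fin k => M) (π : (⨁ fun _ : Fin k => M) ⟶ Z),
    ι ≫ π = 𝟙 Z

variable (n : ℕ) (S : C ⥤ C)

/-- An "unrolled" candidate `(n+2)`-angle: an infinite complex which is
`(n+2)`-periodic up to `S` and the sign `(-1)ⁿ`.  The (n+2)-angle
`X₀ → X₁ → ⋯ → X_{n+1} → S X₀` is recorded by the objects `X 0, …, X (n+1)`,
the maps `d 0, …, d n`, and the connecting morphism `d (n+1) ≫ (σ 0).hom`. -/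
structure Cand where
  X : ℕ → C
  d : ∀ i, X i ⟶ X (i + 1)
  σ : ∀ i, X (n + 2 + i) ≅ S.obj (X i)
  compat : ∀ i, d (n + 2 + i) =
    (σ i).hom ≫ (((-1 : ℤ) ^ n) • S.map (d i)) ≫ (σ (i + 1)).inv

/-- A morphism of candidate `(n+2)`-angles. -/
structure CandHom (A B : Cand n S) where
  φ : ∀ i, A.X i ⟶ B.X i
  comm : ∀ i, A.d i ≫ φ (i + 1) = φ i ≫ B.d i
  shift : ∀ i, φ (n + 2 + i) = (A.σ i).hom ≫ S.map (φ i) ≫ (B.σ i).inv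

variable {n S}

/-- Rotation of a candidate `(n+2)`-angle. -/
def Cand.rot (A : Cand n S) : Cand n S where
  X i := A.X (i + 1)
  d i := A.d (i + 1)
  σ i := A.σ (i + 1)
  compat i := A.compat (i + 1)

/-- The connecting morphism `X_{n+1} ⟶ S X₀` of a candidate `(n+2)`-angle. -/
def Cand.conn (A : Cand n S) : A.X (n + 1) ⟶ S.obj (A.X 0) :=
  A.d (n + 1) ≫ (A.σ 0).hom

variable (n S)

instance (priority := 100) preservesBinaryBiproductsOfAdditive {D : Type u} [Category.{v} D]
    [Preadditive D] (F : C ⥤ D) [F.Additive] : PreservesBinaryBiproducts F :=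
  preservesBinaryBiproducts_of_preservesBiproducts F

/-- The differentials of the mapping cone of a morphism of candidate `(n+2)`-angles. -/
noncomputable def coneD {A B : Cand n S} (Φ : CandHom n S A B) (j : ℕ) :
    (A.X (j + 1)) ⊞ (B.X j) ⟶ (A.X (j + 2)) ⊞ (B.X (j + 1)) :=
  biprod.fst ≫ (-(A.d (j + 1))) ≫ biprod.inl +
  biprod.fst ≫ Φ.φ (j + 1) ≫ biprod.inr +
  biprod.snd ≫ B.d j ≫ biprod.inr

/-- The periodicity isomorphisms of the mapping cone. -/
noncomputable def coneSigma [S.Additive] (A B : Cand n S) (j : ℕ) :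
    (A.X (n + 2 + j + 1)) ⊞ (B.X (n + 2 + j)) ⟶ S.obj ((A.X (j + 1)) ⊞ (B.X j)) :=
  biprod.map (((-1 : ℤ) ^ n) • (A.σ (j + 1)).hom) ((B.σ j).hom) ≫
    (S.mapBiprod (A.X (j + 1)) (B.X j)).inv

/-- A pre-`(n+2)`-angulated structure: a class of `(n+2)`-angles satisfying the
axioms (F1), (F2) and (F3) of Geiss–Keller–Oppermann. -/
structure PreAngulation where
  angles : Set (Cand n S)
  /-- (F1) closure under direct summands (hence under isomorphisms). -/
  retract_mem : ∀ {A B : Cand n S}, B ∈ angles →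
    ∀ (ι : CandHom n S A B) (π : CandHom n S B A),
      (∀ i, ι.φ i ≫ π.φ i = 𝟙 (A.X i)) → A ∈ angles
  /-- (F1) closure under direct sums. -/
  sum_mem : ∀ {A B T : Cand n S}, A ∈ angles → B ∈ angles →
    ∀ (ιA : CandHom n S A T) (ιB : CandHom n S B T)
      (πA : CandHom n S T A) (πB : CandHom n S T B),
      (∀ i, ιA.φ i ≫ πA.φ i = 𝟙 (A.X i)) →
      (∀ i, ιB.φ i ≫ πB.φ i = 𝟙 (B.X i)) →
      (∀ i, ιA.φ i ≫ πB.φ i = 0) →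
      (∀ i, ιB.φ i ≫ πA.φ i = 0) →
      (∀ i, πA.φ i ≫ ιA.φ i + πB.φ i ≫ ιB.φ i = 𝟙 (T.X i)) →
      T ∈ angles
  /-- (F1) trivial `(n+2)`-angles belong to the class. -/
  triv_mem : ∀ T : Cand n S, IsIso (T.d 0) →
    (∀ j, 2 ≤ j → j ≤ n + 1 → IsZero (T.X j)) → T ∈ angles
  /-- (F1) every morphism is the first morphism of some `(n+2)`-angle. -/
  complete : ∀ {X₀ X₁ : C} (f : X₀ ⟶ X₁),
    ∃ A ∈ angles, ∃ (e₀ : Cand.X A 0 ≅ X₀) (e₁ : Cand.X A 1 ≅ X₁),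
      Cand.d A 0 = e₀.hom ≫ f ≫ e₁.inv
  /-- (F2) a candidate is an `(n+2)`-angle iff its rotation is. -/
  rot_mem : ∀ A : Cand n S, A ∈ angles ↔ A.rot ∈ angles
  /-- (F3) completion of commutative squares to morphisms of `(n+2)`-angles. -/
  ext_hom : ∀ {A B : Cand n S}, A ∈ angles → B ∈ angles →
    ∀ (φ₀ : Cand.X A 0 ⟶ Cand.X B 0) (φ₁ : Cand.X A 1 ⟶ Cand.X B 1),
      Cand.d A 0 ≫ φ₁ = φ₀ ≫ Cand.d B 0 →
      ∃ Φ : CandHom n S A B, Φ.φ 0 = φ₀ ∧ Φ.φ 1 = φ₁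

/-- An `(n+2)`-angulated structure: a pre-`(n+2)`-angulated structure satisfying
moreover the higher octahedral axiom, in the "good morphism"/mapping cone form of
Bergh–Thaule (equivalent to (F4) and to (N4*)). -/
structure Angulation [S.Additive] extends PreAngulation n S where
  octa : ∀ {A B : Cand n S}, A ∈ angles → B ∈ angles →
    ∀ (φ₀ : Cand.X A 0 ⟶ Cand.X B 0) (φ₁ : Cand.X A 1 ⟶ Cand.X B 1),
      Cand.d A 0 ≫ φ₁ = φ₀ ≫ Cand.d B 0 →
      ∃ Φ : CandHom n S A B, Φ.φ 0 = φ₀ ∧ Φ.φ 1 = φ₁ ∧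
        ∃ T ∈ angles, ∃ e : ∀ j, Cand.X T j ≅ (Cand.X A (j + 1)) ⊞ (Cand.X B j),
          (∀ j, Cand.d T j = (e j).hom ≫ coneD n S Φ j ≫ (e (j + 1)).inv) ∧
          (∀ j, (Cand.σ T j).hom =
            (e (n + 2 + j)).hom ≫ coneSigma n S A B j ≫ S.map (e j).inv)

/-- A full subcategory (given by a predicate on objects) is additive if it contains
the zero objects and is closed under binary direct sums and direct summands. -/
def AddClosed (P : C → Prop) : Prop :=
  (∀ X : C, IsZero X → P X) ∧
  (∀ X Y : C, P X → P Y → P (X ⊞ Y)) ∧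
  (∀ X Y : C, P Y → ∀ (i : X ⟶ Y) (r : Y ⟶ X), i ≫ r = 𝟙 X → P X)

/-- The subcategory `P` is `n`-extension closed with respect to the class `ang` of
`(n+2)`-angles. -/
def ExtClosed (P : C → Prop) (ang : Set (Cand n S)) : Prop :=
  ∀ {A₀ Atop : C}, P A₀ → P Atop → ∀ f : Atop ⟶ S.obj A₀,
    ∃ W ∈ ang, ∃ (e₀ : Cand.X W 0 ≅ A₀) (etop : Cand.X W (n + 1) ≅ Atop),
      (∀ j, 1 ≤ j → j ≤ n → P (Cand.X W j)) ∧
      Cand.conn W = etop.hom ≫ f ≫ S.map e₀.inv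

/-- The candidate `(n+2)`-angle `W` matches the finite complex `(X, d)` in
positions `0, …, n+1`. -/
def Matches (W : Cand n S) (X : ℕ → C) (d : ∀ i, X i ⟶ X (i + 1)) : Prop :=
  ∃ e : ∀ j, j ≤ n + 1 → (Cand.X W j ≅ X j),
    ∀ j (h : j + 1 ≤ n + 1),
      Cand.d W j = (e j (Nat.le_of_succ_le h)).hom ≫ d j ≫ (e (j + 1) h).inv

/-- `(X, d)` is an `𝒜`-conflation: a complex with terms in `P` which can be
completed to an `(n+2)`-angle. -/
def IsConflation (P : C → Prop) (ang : Set (Cand n S))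
    (X : ℕ → C) (d : ∀ i, X i ⟶ X (i + 1)) : Prop :=
  (∀ j, j ≤ n + 1 → P (X j)) ∧ ∃ W ∈ ang, Matches n S W X d

/-- An `𝒜`-inflation: a morphism in position `0` of some `𝒜`-conflation. -/
def IsInflation (P : C → Prop) (ang : Set (Cand n S)) {X₀ X₁ : C} (f : X₀ ⟶ X₁) : Prop :=
  ∃ (X : ℕ → C) (d : ∀ i, X i ⟶ X (i + 1)), IsConflation n S P ang X d ∧
    ∃ (e₀ : X 0 ≅ X₀) (e₁ : X 1 ≅ X₁), d 0 = e₀.hom ≫ f ≫ e₁.inv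

/-- An `𝒜`-deflation: a morphism in position `n` of some `𝒜`-conflation. -/
def IsDeflation (P : C → Prop) (ang : Set (Cand n S)) {Y₀ Y₁ : C} (f : Y₀ ⟶ Y₁) : Prop :=
  ∃ (X : ℕ → C) (d : ∀ i, X i ⟶ X (i + 1)), IsConflation n S P ang X d ∧
    ∃ (e₀ : X n ≅ Y₀) (e₁ : X (n + 1) ≅ Y₁), d n = e₀.hom ≫ f ≫ e₁.inv

variable {n S}

end NAng

namespace NAng

variable {C : Type u} [Category.{v} C] [Preadditive C] [HasFiniteBiproducts C]

/-- `g` is a weak cokernel of `f` (in the ambient category). -/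
def IsWeakCokernel {X Y Z : C} (f : X ⟶ Y) (g : Y ⟶ Z) : Prop :=
  f ≫ g = 0 ∧ ∀ (W : C) (h : Y ⟶ W), f ≫ h = 0 → ∃ k : Z ⟶ W, h = g ≫ k

/-- `f` is a weak kernel of `g` (in the ambient category). -/
def IsWeakKernel {X Y Z : C} (f : X ⟶ Y) (g : Y ⟶ Z) : Prop :=
  f ≫ g = 0 ∧ ∀ (W : C) (h : W ⟶ Y), h ≫ g = 0 → ∃ k : W ⟶ X, h = k ≫ f

/-- `g` is a weak cokernel of `f` in the full subcategory `P`. -/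
def WeakCokernelIn (P : C → Prop) {X Y Z : C} (f : X ⟶ Y) (g : Y ⟶ Z) : Prop :=
  f ≫ g = 0 ∧ ∀ (W : C), P W → ∀ h : Y ⟶ W, f ≫ h = 0 → ∃ k : Z ⟶ W, h = g ≫ k

/-- `f` is a weak kernel of `g` in the full subcategory `P`. -/
def WeakKernelIn (P : C → Prop) {X Y Z : C} (f : X ⟶ Y) (g : Y ⟶ Z) : Prop :=
  f ≫ g = 0 ∧ ∀ (W : C), P W → ∀ h : W ⟶ Y, h ≫ g = 0 → ∃ k : W ⟶ X, h = k ≫ f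

/-- `f` is a monomorphism in the full subcategory `P`. -/
def MonoIn (P : C → Prop) {X Y : C} (f : X ⟶ Y) : Prop :=
  ∀ (W : C), P W → ∀ a b : W ⟶ X, a ≫ f = b ≫ f → a = b

/-- `f` is an epimorphism in the full subcategory `P`. -/
def EpiIn (P : C → Prop) {X Y : C} (f : X ⟶ Y) : Prop :=
  ∀ (W : C), P W → ∀ a b : Y ⟶ W, f ≫ a = f ≫ b → a = b

variable (n : ℕ)

/-- `(X, d)` (positions `0, …, n+1`) is an `n`-exact sequence in the full additive
subcategory `P`. -/
def IsNExact (P : C → Prop) (X : ℕ → C) (d : ∀ i, X i ⟶ X (i + 1)) : Prop :=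
  (∀ j, j ≤ n + 1 → P (X j)) ∧
  MonoIn P (d 0) ∧ EpiIn P (d n) ∧
  (∀ i, i < n → WeakCokernelIn P (d i) (d (i + 1))) ∧
  (∀ i, i < n → WeakKernelIn P (d i) (d (i + 1)))

/-- An `n`-pushout diagram in the sense of Jasso, of the rows
`X 0 → ⋯ → X n` and `Y 0 → ⋯ → Y n` along the vertical morphisms `φ`. -/
def IsNPushout (P : C → Prop) (X : ℕ → C) (dX : ∀ i, X i ⟶ X (i + 1))
    (Y : ℕ → C) (dY : ∀ i, Y i ⟶ Y (i + 1)) (φ : ∀ k, X k ⟶ Y k) : Prop :=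
  (∀ k, k < n → dX k ≫ φ (k + 1) = φ k ≫ dY k) ∧
  ∃ (Q : ℕ → C) (dQ : ∀ i, Q i ⟶ Q (i + 1)) (α₀ : Q 0 ≅ X 0)
    (α : ∀ k, 1 ≤ k → k ≤ n → (Q k ≅ (X k) ⊞ (Y (k - 1)))) (αtop : Q (n + 1) ≅ Y n),
    (∀ h : 1 ≤ n,
      dQ 0 = α₀.hom ≫ biprod.lift (-(dX 0)) (φ 0) ≫ (α 1 le_rfl h).inv) ∧
    (∀ j, (h : j + 2 ≤ n) →
      dQ (j + 1) = (α (j + 1) (by omega) (by omega)).hom ≫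
        (biprod.fst ≫ (-(dX (j + 1))) ≫ biprod.inl +
         biprod.fst ≫ φ (j + 1) ≫ biprod.inr +
         biprod.snd ≫ dY j ≫ biprod.inr) ≫ (α (j + 2) (by omega) h).inv) ∧
    (∀ j, (h : j + 1 = n) →
      dQ (j + 1) = (α (j + 1) (by omega) (by omega)).hom ≫
        biprod.desc (φ (j + 1)) (dY j) ≫ eqToHom (by rw [h]) ≫ αtop.inv ≫
          eqToHom (by rw [h])) ∧
    (∀ k, k < n → WeakCokernelIn P (dQ k) (dQ (k + 1)))

/-- An `n`-pullback diagram in the sense of Jasso, of the rows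
`X 1 → ⋯ → X (n+1)` and `Y 1 → ⋯ → Y (n+1)` along the vertical morphisms `ψ`. -/
def IsNPullback (P : C → Prop) (X : ℕ → C) (dX : ∀ i, X i ⟶ X (i + 1))
    (Y : ℕ → C) (dY : ∀ i, Y i ⟶ Y (i + 1)) (ψ : ∀ k, Y k ⟶ X k) : Prop :=
  (∀ k, 1 ≤ k → k ≤ n → dY k ≫ ψ (k + 1) = ψ k ≫ dX k) ∧
  ∃ (Q : ℕ → C) (dQ : ∀ i, Q i ⟶ Q (i + 1)) (α₀ : Q 0 ≅ Y 1)
    (α : ∀ k, 1 ≤ k → k ≤ n → (Q k ≅ (Y (k + 1)) ⊞ (X k))) (αtop : Q (n + 1) ≅ X (n + 1)),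
    (∀ h : 1 ≤ n,
      dQ 0 = α₀.hom ≫ biprod.lift (-(dY 1)) (ψ 1) ≫ (α 1 le_rfl h).inv) ∧
    (∀ k, (h1 : 1 ≤ k) → (h : k + 1 ≤ n) →
      dQ k = (α k h1 (by omega)).hom ≫
        (biprod.fst ≫ (-(dY (k + 1))) ≫ biprod.inl +
         biprod.fst ≫ ψ (k + 1) ≫ biprod.inr +
         biprod.snd ≫ dX k ≫ biprod.inr) ≫ (α (k + 1) (by omega) h).inv) ∧
    (∀ h : 1 ≤ n,
      dQ n = (α n h le_rfl).hom ≫ biprod.desc (ψ (n + 1)) (dX n) ≫ αtop.inv) ∧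
    (∀ k, k < n → WeakKernelIn P (dQ k) (dQ (k + 1)))

end NAng

namespace NAng

section Aux

set_option linter.unusedSectionVars false
open ZeroObject

variable {C : Type u} [Category.{v} C] [Preadditive C] [HasFiniteBiproducts C]
variable {n : ℕ} {S : C ⥤ C}

lemma triv_mod (n i : ℕ) :
    (n + 2 + i) % (n + 2) = i % (n + 2) ∧ (n + 2 + i) / (n + 2) = i / (n + 2) + 1 := by
  rw [show n + 2 + i = i + (n + 2) by omega]
  exact ⟨Nat.add_mod_right _ _, Nat.add_div_right _ (by omega)⟩

lemma triv_arith {n a i : ℕ} (ha : a + 1 < n + 2) (h : i % (n + 2) = a) :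
    (i + 1) % (n + 2) = a + 1 ∧ (i + 1) / (n + 2) = i / (n + 2) := by
  have hd := Nat.div_add_mod i (n + 2)
  set q := i / (n + 2) with hq
  have hi' : i + 1 = a + 1 + (n + 2) * q := by omega
  constructor
  · rw [hi', Nat.add_mul_mod_self_left, Nat.mod_eq_of_lt ha]
  · rw [hi', Nat.add_mul_div_left _ _ (by omega), Nat.div_eq_of_lt ha, Nat.zero_add]

lemma smul_cancel {X Y : C} (m : ℕ) {f g : X ⟶ Y}
    (h : ((-1 : ℤ) ^ m) • f = ((-1 : ℤ) ^ m) • g) : f = g := by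
  have key : ((-1 : ℤ) ^ m) * ((-1 : ℤ) ^ m) = 1 := by
    rw [← mul_pow]; norm_num
  have h2 := congrArg (fun t => ((-1 : ℤ) ^ m) • t) h
  simpa [smul_smul, key] using h2

variable (n S) in
/-- Objects of the shifted trivial candidate: `W` in residues `a, a+1` modulo
`n+2`, a zero object elsewhere, with `S` applied once for every full period. -/
noncomputable def trivX (a : ℕ) (W : C) (i : ℕ) : C :=
  (S.obj)^[i / (n + 2)] (if i % (n + 2) = a ∨ i % (n + 2) = a + 1 then W else 0)

lemma trivX_shift (a : ℕ) (W : C) (i : ℕ) :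
    trivX n S a W (n + 2 + i) = S.obj (trivX n S a W i) := by
  unfold trivX
  rw [(triv_mod n i).1, (triv_mod n i).2, Function.iterate_succ_apply']

lemma trivX_succ {a i : ℕ} (ha : a + 1 < n + 2) (h : i % (n + 2) = a) (W : C) :
    trivX n S a W i = trivX n S a W (i + 1) := by
  unfold trivX
  rw [(triv_arith ha h).1, (triv_arith ha h).2, h, if_pos (Or.inl rfl),
    if_pos (Or.inr rfl)]

lemma trivX_eqW {a i : ℕ} (h : i % (n + 2) = a ∨ i % (n + 2) = a + 1)
    (hd : i / (n + 2) = 0) (W : C) : trivX n S a W i = W := by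
  unfold trivX
  rw [if_pos h, hd, Function.iterate_zero_apply]

lemma trivX_isZero [S.Additive] {a : ℕ} (W : C) {i : ℕ}
    (h : ¬(i % (n + 2) = a ∨ i % (n + 2) = a + 1)) : IsZero (trivX n S a W i) := by
  unfold trivX
  rw [if_neg h]
  induction i / (n + 2) with
  | zero => exact isZero_zero C
  | succ k ih =>
    rw [Function.iterate_succ_apply']
    exact S.map_isZero ih

variable (n S) in
/-- Differentials of the shifted trivial candidate. -/
noncomputable def trivD (a : ℕ) (ha : a + 1 < n + 2) (W : C) (i : ℕ) :
    trivX n S a W i ⟶ trivX n S a W (i + 1) :=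
  if h : i % (n + 2) = a then
    ((-1 : ℤ) ^ (n * (i / (n + 2)))) • eqToHom (trivX_succ ha h W)
  else 0

lemma trivD_compat [S.Additive] (a : ℕ) (ha : a + 1 < n + 2) (W : C) (i : ℕ) :
    trivD n S a ha W (n + 2 + i) =
      (eqToIso (trivX_shift a W i)).hom ≫
        (((-1 : ℤ) ^ n) • S.map (trivD n S a ha W i)) ≫
          (eqToIso (trivX_shift a W (i + 1))).inv := by
  by_cases h : i % (n + 2) = a
  · have h' : (n + 2 + i) % (n + 2) = a := by rw [(triv_mod n i).1]; exact h
    unfold trivD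
    rw [dif_pos h', dif_pos h, (triv_mod n i).2]
    rw [Functor.map_zsmul, eqToHom_map, eqToIso.hom, eqToIso.inv]
    simp only [Preadditive.comp_zsmul, Preadditive.zsmul_comp, smul_smul, eqToHom_trans]
    rw [show n * (i / (n + 2) + 1) = n + n * (i / (n + 2)) by ring, pow_add]
  · have h' : ¬(n + 2 + i) % (n + 2) = a := by rw [(triv_mod n i).1]; exact h
    unfold trivD
    rw [dif_neg h', dif_neg h, Functor.map_zero, smul_zero, zero_comp, comp_zero]

variable (n S) in
/-- The shifted trivial candidate. -/
@[reducible] noncomputable def Triv [S.Additive] (a : ℕ) (ha : a + 1 < n + 2) (W : C) : Cand n S where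
  X := trivX n S a W
  d := trivD n S a ha W
  σ i := eqToIso (trivX_shift a W i)
  compat := trivD_compat a ha W

lemma Triv0_mem [S.Additive] (PA : PreAngulation n S) (W : C) (ha : 0 + 1 < n + 2) :
    Triv n S 0 ha W ∈ PA.angles := by
  apply PA.triv_mem
  · show IsIso (trivD n S 0 ha W 0)
    unfold trivD
    rw [dif_pos (Nat.zero_mod _), Nat.zero_div, mul_zero, pow_zero, one_smul]
    infer_instance
  · intro j h2 hj
    have hm : j % (n + 2) = j := Nat.mod_eq_of_lt (by omega)
    exact trivX_isZero W (by omega)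

lemma Triv1_mem [S.Additive] (PA : PreAngulation n S) (W : C) (ha : 1 + 1 < n + 2) :
    Triv n S 1 ha W ∈ PA.angles := by
  rw [PA.rot_mem]
  apply PA.triv_mem
  · show IsIso (trivD n S 1 ha W 1)
    unfold trivD
    rw [dif_pos (Nat.mod_eq_of_lt (by omega)), Nat.div_eq_of_lt (by omega), mul_zero,
      pow_zero, one_smul]
    infer_instance
  · intro j h2 hj
    show IsZero (trivX n S 1 W (j + 1))
    rcases Nat.lt_or_ge (j + 1) (n + 2) with hlt | hge
    · have hm : (j + 1) % (n + 2) = j + 1 := Nat.mod_eq_of_lt hlt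
      exact trivX_isZero W (by omega)
    · have hj2 : j + 1 = n + 2 := by omega
      have hm : (j + 1) % (n + 2) = 0 := by rw [hj2, Nat.mod_self]
      exact trivX_isZero W (by omega)

lemma comp_zero₀ [S.Additive] (PA : PreAngulation n S) {A : Cand n S}
    (hA : A ∈ PA.angles) : A.d 0 ≫ A.d 1 = 0 := by
  have ha : 0 + 1 < n + 2 := by omega
  have hTm : Triv n S 0 ha (A.X 0) ∈ PA.angles := Triv0_mem PA (A.X 0) ha
  have t0 : (Triv n S 0 ha (A.X 0)).X 0 = A.X 0 :=
    trivX_eqW (Or.inl (Nat.zero_mod _)) (Nat.zero_div _) _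
  have t1 : (Triv n S 0 ha (A.X 0)).X 1 = A.X 0 :=
    trivX_eqW (Or.inr (Nat.mod_eq_of_lt (by omega))) (Nat.div_eq_of_lt (by omega)) _
  have sq : Cand.d (Triv n S 0 ha (A.X 0)) 0 ≫ (eqToHom t1 ≫ A.d 0)
      = eqToHom t0 ≫ Cand.d A 0 := by
    show trivD n S 0 ha (A.X 0) 0 ≫ _ = _
    unfold trivD
    rw [dif_pos (Nat.zero_mod _), Nat.zero_div, mul_zero, pow_zero, one_smul,
      eqToHom_trans_assoc]
  obtain ⟨Φ, h0, h1⟩ := PA.ext_hom hTm hA (eqToHom t0) (eqToHom t1 ≫ A.d 0) sq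
  have hd1 : Cand.d (Triv n S 0 ha (A.X 0)) 1 = 0 := by
    show trivD n S 0 ha (A.X 0) 1 = 0
    unfold trivD
    rw [dif_neg (by rw [Nat.mod_eq_of_lt (by omega : (1 : ℕ) < n + 2)]; omega)]
  have c1 := Φ.comm 1
  rw [hd1, zero_comp, h1] at c1
  have c2 := congrArg (fun t => eqToHom t1.symm ≫ t) c1
  simpa using c2.symm

lemma wcok₀ [S.Additive] (PA : PreAngulation n S) (hn : 1 ≤ n) {A : Cand n S}
    (hA : A ∈ PA.angles) {W' : C} (h : A.X 1 ⟶ W') (hh : A.d 0 ≫ h = 0) :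
    ∃ k : A.X 2 ⟶ W', h = A.d 1 ≫ k := by
  have ha : 1 + 1 < n + 2 := by omega
  have hBm : Triv n S 1 ha W' ∈ PA.angles := Triv1_mem PA W' ha
  have s1 : (Triv n S 1 ha W').X 1 = W' :=
    trivX_eqW (Or.inl (Nat.mod_eq_of_lt (by omega))) (Nat.div_eq_of_lt (by omega)) _
  have s2 : (Triv n S 1 ha W').X 2 = W' :=
    trivX_eqW (Or.inr (Nat.mod_eq_of_lt (by omega))) (Nat.div_eq_of_lt (by omega)) _
  obtain ⟨Φ, h0, h1⟩ := PA.ext_hom hA hBm 0 (h ≫ eqToHom s1.symm)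
    (by rw [← Category.assoc, hh, zero_comp, zero_comp])
  have hd1 : Cand.d (Triv n S 1 ha W') 1
      = eqToHom (trivX_succ ha (Nat.mod_eq_of_lt (by omega)) W') := by
    show trivD n S 1 ha W' 1 = _
    unfold trivD
    rw [dif_pos (Nat.mod_eq_of_lt (by omega)), Nat.div_eq_of_lt (by omega), mul_zero,
      pow_zero, one_smul]
  have c1 := Φ.comm 1
  rw [h1, hd1] at c1
  refine ⟨Φ.φ 2 ≫ eqToHom s2, ?_⟩
  have c2 := congrArg (fun t => t ≫ eqToHom s2) c1
  simpa using c2.symm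

lemma wker₀ [S.Additive] [S.Full] [S.Faithful] (PA : PreAngulation n S)
    {A : Cand n S} (hA : A ∈ PA.angles) {W' : C} (h : W' ⟶ A.X 1)
    (hh : h ≫ A.d 1 = 0) : ∃ k : W' ⟶ A.X 0, h = k ≫ A.d 0 := by
  have ha : 0 + 1 < n + 2 := by omega
  have hTm : (Triv n S 0 ha W').rot ∈ PA.angles :=
    (PA.rot_mem _).mp (Triv0_mem PA W' ha)
  have hAm : A.rot ∈ PA.angles := (PA.rot_mem A).mp hA
  have t1 : (Triv n S 0 ha W').X 1 = W' :=
    trivX_eqW (Or.inr (Nat.mod_eq_of_lt (by omega))) (Nat.div_eq_of_lt (by omega)) _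
  have sq : Cand.d (Triv n S 0 ha W').rot 0 ≫ (0 : (Triv n S 0 ha W').X 2 ⟶ A.X 2)
      = (eqToHom t1 ≫ h) ≫ Cand.d A.rot 0 := by
    show Cand.d (Triv n S 0 ha W') 1 ≫ (0 : (Triv n S 0 ha W').X 2 ⟶ A.X 2)
      = (eqToHom t1 ≫ h) ≫ A.d 1
    rw [comp_zero, Category.assoc, hh, comp_zero]
  obtain ⟨Φ, h0, h1⟩ := PA.ext_hom hTm hAm (eqToHom t1 ≫ h) 0 sq
  have pf : (Triv n S 0 ha W').X (n + 2) = (Triv n S 0 ha W').X (n + 3) :=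
    trivX_succ ha (Nat.mod_self _) W'
  have hTd : Cand.d (Triv n S 0 ha W') (n + 2) = ((-1 : ℤ) ^ n) • eqToHom pf := by
    show trivD n S 0 ha W' (n + 2) = _
    unfold trivD
    rw [dif_pos (Nat.mod_self _), Nat.div_self (by omega), mul_one]
  have hσT : (Cand.σ (Triv n S 0 ha W') 1).hom
      = eqToHom (trivX_shift (n := n) (S := S) 0 W' 1) := rfl
  have shift : Φ.φ (n + 2) =
      (Cand.σ (Triv n S 0 ha W') 1).hom ≫ S.map (Φ.φ 0) ≫ (Cand.σ A 1).inv :=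
    Φ.shift 0
  have hcom : Cand.d A (n + 2) =
      (Cand.σ A 0).hom ≫ (((-1 : ℤ) ^ n) • S.map (Cand.d A 0)) ≫ (Cand.σ A 1).inv :=
    A.compat 0
  have key : Cand.d (Triv n S 0 ha W') (n + 2) ≫ Φ.φ (n + 2)
      = Φ.φ (n + 1) ≫ Cand.d A (n + 2) := Φ.comm (n + 1)
  rw [hTd, shift, h0, hcom, hσT] at key
  erw [Functor.map_comp, eqToHom_map] at key
  replace key : ((-1 : ℤ) ^ n • eqToHom pf) ≫ eqToHom (trivX_shift (n := n) (S := S) 0 W' 1) ≫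
      (eqToHom (congrArg S.obj t1) ≫ S.map h) ≫ (Cand.σ A 1).inv =
      Φ.φ (n + 1) ≫ (Cand.σ A 0).hom ≫ (((-1 : ℤ) ^ n) • S.map (Cand.d A 0)) ≫
        (Cand.σ A 1).inv := key
  simp only [Preadditive.zsmul_comp, Preadditive.comp_zsmul, Category.assoc] at key
  have key2 := smul_cancel n (key.trans ((congrArg (fun t => Φ.φ (n + 1) ≫ t)
    (Preadditive.comp_zsmul _ _ _)).trans (Preadditive.comp_zsmul _ _ _)))
  obtain ⟨k0, hk0⟩ := S.map_surjective
    (eqToHom (congrArg S.obj t1).symm ≫ eqToHom (trivX_shift (n := n) (S := S) 0 W' 1).symm ≫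
      eqToHom pf.symm ≫ Φ.φ (n + 1) ≫ (Cand.σ A 0).hom)
  refine ⟨k0, S.map_injective ?_⟩
  rw [Functor.map_comp, hk0]
  have key3 := congrArg
    (fun t => eqToHom (congrArg S.obj t1).symm ≫
      eqToHom (trivX_shift (n := n) (S := S) 0 W' 1).symm ≫ eqToHom pf.symm ≫ t) key2
  simp only [Category.assoc, eqToHom_trans_assoc, eqToHom_refl, Category.id_comp] at key3
  have key4 := congrArg (fun t => t ≫ (Cand.σ A 1).hom) key3
  simp only [Category.assoc, Iso.inv_hom_id, Category.comp_id, Iso.inv_hom_id_assoc] at key4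
  dsimp only [Cand.rot] at key4 ⊢
  simpa [Category.assoc] using key4

lemma comp_zero_all [S.Additive] (PA : PreAngulation n S) :
    ∀ (i : ℕ) {A : Cand n S}, A ∈ PA.angles → A.d i ≫ A.d (i + 1) = 0 := by
  intro i
  induction i with
  | zero => intro A hA; exact comp_zero₀ PA hA
  | succ i ih => intro A hA; exact ih (A := A.rot) ((PA.rot_mem A).mp hA)

lemma wcok_all [S.Additive] (PA : PreAngulation n S) (hn : 1 ≤ n) :
    ∀ (i : ℕ) {A : Cand n S}, A ∈ PA.angles → ∀ {W' : C} (h : A.X (i + 1) ⟶ W'),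
      A.d i ≫ h = 0 → ∃ k : A.X (i + 2) ⟶ W', h = A.d (i + 1) ≫ k := by
  intro i
  induction i with
  | zero => intro A hA W' h hh; exact wcok₀ PA hn hA h hh
  | succ i ih => intro A hA W' h hh; exact ih (A := A.rot) ((PA.rot_mem A).mp hA) h hh

lemma wker_all [S.Additive] [S.Full] [S.Faithful] (PA : PreAngulation n S) :
    ∀ (i : ℕ) {A : Cand n S}, A ∈ PA.angles → ∀ {W' : C} (h : W' ⟶ A.X (i + 1)),
      h ≫ A.d (i + 1) = 0 → ∃ k : W' ⟶ A.X i, h = k ≫ A.d i := by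
  intro i
  induction i with
  | zero => intro A hA W' h hh; exact wker₀ PA hA h hh
  | succ i ih => intro A hA W' h hh; exact ih (A := A.rot) ((PA.rot_mem A).mp hA) h hh

end Aux


/-- Let `(F, Σₙ, ⬠)` be an `(n+2)`-angulated Krull–Schmidt category
and `A ⊆ F` a full, additive, `n`-extension closed subcategory with
`Hom(Σₙ A, A) = 0`.  Then every `A`-conflation is an `n`-exact sequence in `A`. -/
theorem statement_9 {C : Type u} [Category.{v} C] [Preadditive C] [HasFiniteBiproducts C]
    (n : ℕ) (hn : 1 ≤ n) (e : C ≌ C) [e.functor.Additive]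
    (ANG : Angulation n e.functor) (hKS : KrullSchmidt C)
    (P : C → Prop) (hAdd : AddClosed P)
    (hExt : ExtClosed n e.functor P ANG.angles)
    (hHom : ∀ {A A' : C}, P A → P A' → ∀ f : e.functor.obj A ⟶ A', f = 0) :
    ∀ (X : ℕ → C) (d : ∀ i, X i ⟶ X (i + 1)),
      IsConflation n e.functor P ANG.angles X d → IsNExact n P X d := by
  intro X d hconf
  obtain ⟨hP, W, hWmem, EE, hEE⟩ := hconf
  refine ⟨hP, ?_, ?_, ?_, ?_⟩
  · -- `MonoIn P (d 0)`
    intro W' hW' a b hab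
    rw [← sub_eq_zero]
    have hc : (a - b) ≫ d 0 = 0 := by rw [Preadditive.sub_comp, hab, sub_self]
    have hu : ((a - b) ≫ (EE 0 (by omega)).inv) ≫ W.d 0 = 0 := by
      rw [hEE 0 (by omega)]
      simp only [Category.assoc, Iso.inv_hom_id_assoc]
      rw [reassoc_of% hc, zero_comp]
    have hcompat : W.d (n + 2) = (W.σ 0).hom ≫
        (((-1 : ℤ) ^ n) • e.functor.map (W.d 0)) ≫ (W.σ 1).inv := W.compat 0
    have hz : (e.functor.map ((a - b) ≫ (EE 0 (by omega)).inv) ≫ (W.σ 0).inv) ≫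
        W.d (n + 2) = 0 := by
      rw [hcompat]
      simp only [Category.assoc, Iso.inv_hom_id_assoc, Preadditive.zsmul_comp,
        Preadditive.comp_zsmul]
      rw [← Functor.map_comp_assoc, hu, Functor.map_zero, zero_comp, smul_zero]
    obtain ⟨k, hk⟩ := wker_all ANG.toPreAngulation (n + 1) hWmem _ hz
    have hk0 : k ≫ (EE (n + 1) le_rfl).hom = 0 := hHom hW' (hP (n + 1) le_rfl) _
    have hkz : k = 0 := by
      have h2 := congrArg (fun t => t ≫ (EE (n + 1) le_rfl).inv) hk0
      simpa using h2
    rw [hkz, zero_comp] at hk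
    have hmap : e.functor.map ((a - b) ≫ (EE 0 (by omega)).inv) = 0 := by
      have h2 := congrArg (fun t => t ≫ (W.σ 0).hom) hk
      simpa using h2
    have hab0 : (a - b) ≫ (EE 0 (by omega)).inv = 0 :=
      e.functor.map_injective (by rw [hmap, Functor.map_zero])
    have h2 := congrArg (fun t => t ≫ (EE 0 (by omega)).hom) hab0
    simpa using h2
  · -- `EpiIn P (d n)`
    intro W' hW' a b hab
    rw [← sub_eq_zero]
    have hc : d n ≫ (a - b) = 0 := by rw [Preadditive.comp_sub, hab, sub_self]
    have hu : W.d n ≫ ((EE (n + 1) le_rfl).hom ≫ (a - b)) = 0 := by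
      rw [hEE n (by omega)]
      simp only [Category.assoc, Iso.inv_hom_id_assoc]
      rw [hc, comp_zero]
    obtain ⟨k, hk⟩ := wcok_all ANG.toPreAngulation hn n hWmem _ hu
    have hz : e.functor.map (EE 0 (by omega)).inv ≫ (W.σ 0).inv ≫ k = 0 :=
      hHom (hP 0 (by omega)) hW' _
    have hkz : k = 0 := by
      have h2 := congrArg
        (fun t => (W.σ 0).hom ≫ e.functor.map (EE 0 (by omega)).hom ≫ t) hz
      simpa [← Functor.map_comp_assoc, ← Functor.map_comp] using h2
    rw [hkz, comp_zero] at hk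
    have h2 := congrArg (fun t => (EE (n + 1) le_rfl).inv ≫ t) hk
    simpa using h2
  · -- weak cokernels
    intro i hi
    constructor
    · have hz := comp_zero_all ANG.toPreAngulation i hWmem
      rw [hEE i (by omega), hEE (i + 1) (by omega)] at hz
      have h2 := congrArg
        (fun t => (EE i (by omega)).inv ≫ t ≫ (EE (i + 2) (by omega)).hom) hz
      simpa using h2
    · intro W'' hW'' h hdh
      have hu : W.d i ≫ ((EE (i + 1) (by omega)).hom ≫ h) = 0 := by
        rw [hEE i (by omega)]
        simp only [Category.assoc, Iso.inv_hom_id_assoc]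
        rw [hdh, comp_zero]
      obtain ⟨k, hk⟩ := wcok_all ANG.toPreAngulation hn i hWmem _ hu
      refine ⟨(EE (i + 2) (by omega)).inv ≫ k, ?_⟩
      have h2 := congrArg (fun t => (EE (i + 1) (by omega)).inv ≫ t) hk
      rw [hEE (i + 1) (by omega)] at h2
      simpa using h2
  · -- weak kernels
    intro i hi
    constructor
    · have hz := comp_zero_all ANG.toPreAngulation i hWmem
      rw [hEE i (by omega), hEE (i + 1) (by omega)] at hz
      have h2 := congrArg
        (fun t => (EE i (by omega)).inv ≫ t ≫ (EE (i + 2) (by omega)).hom) hz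
      simpa using h2
    · intro W'' hW'' h hdh
      have hu : (h ≫ (EE (i + 1) (by omega)).inv) ≫ W.d (i + 1) = 0 := by
        rw [hEE (i + 1) (by omega)]
        simp only [Category.assoc, Iso.inv_hom_id_assoc]
        rw [reassoc_of% hdh, zero_comp]
      obtain ⟨k, hk⟩ := wker_all ANG.toPreAngulation i hWmem _ hu
      refine ⟨k ≫ (EE i (by omega)).hom, ?_⟩
      have h2 := congrArg (fun t => t ≫ (EE (i + 1) (by omega)).hom) hk
      rw [hEE i (by omega)] at h2
      simpa using h2

end NAng
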